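/- Let z⁺_LP be the optimal value (+∞ if infeasible) of: minimize Σ_{q=1}^Q |ε_q − 1| over (c, y, ε_1, …, ε_Q) subject to Aᵀ y = c, y ≥ 0, cᵀ x̂_q = ε_q for all q, and bᵀ y = 1. Let z⁻_LP be the optimal value (+∞ if infeasible) of the analogous problem with cᵀ x̂_q = −ε_q for all q and bᵀ y = −1. Let z⁰_LP = 0 if there exist (c, y) with Aᵀ y = c, y ≥ 0, cᵀ x̂_q = 0 for all q, bᵀ y = 0, and yᵀ 1 = 1 (with ε_q := 1 for all q in this sub-problem), and z⁰_LP = +∞ otherwise. Let z*_LP = min{z⁺_LP, z⁻_LP, z⁰_LP} and let (c*, y*, ε_1*, …, ε_Q*) be an optimal solution of the sub-problem attaining z*_LP. If c* ≠ 0, then z*_LP equals the optimal value of GIO_R(X̂) and (c*/‖c*‖', y*/‖c*‖', ε_1*, …, ε_Q*) is an optimal solution of GIO_R(X̂). -/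

import Mathlib

open Matrix
open scoped ENNReal

/-- Feasibility for the relative duality gap inverse problem `GIO_R(X̂)`,
including the convention that `bᵀ y = 0` forces `ε_q = 1` for all `q`. -/
def FeasR {m n Q : ℕ} (A : Matrix (Fin m) (Fin n) ℝ) (b : Fin m → ℝ)
    (N : (Fin n → ℝ) → ℝ) (xhat : Fin Q → Fin n → ℝ)
    (c : Fin n → ℝ) (y : Fin m → ℝ) (ε : Fin Q → ℝ) : Prop :=
  Aᵀ.mulVec y = c ∧ (∀ i, 0 ≤ y i) ∧ (∀ q, c ⬝ᵥ xhat q = ε q * (b ⬝ᵥ y)) ∧ N c = 1 ∧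
    (b ⬝ᵥ y = 0 → ∀ q, ε q = 1)

/-- Feasibility for the LP relaxation `GIO_R⁺_LP(X̂)`. -/
def FeasPLP {m n Q : ℕ} (A : Matrix (Fin m) (Fin n) ℝ) (b : Fin m → ℝ)
    (xhat : Fin Q → Fin n → ℝ)
    (c : Fin n → ℝ) (y : Fin m → ℝ) (ε : Fin Q → ℝ) : Prop :=
  Aᵀ.mulVec y = c ∧ (∀ i, 0 ≤ y i) ∧ (∀ q, c ⬝ᵥ xhat q = ε q) ∧ b ⬝ᵥ y = 1

/-- Feasibility for the LP relaxation `GIO_R⁻_LP(X̂)`. -/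
def FeasNLP {m n Q : ℕ} (A : Matrix (Fin m) (Fin n) ℝ) (b : Fin m → ℝ)
    (xhat : Fin Q → Fin n → ℝ)
    (c : Fin n → ℝ) (y : Fin m → ℝ) (ε : Fin Q → ℝ) : Prop :=
  Aᵀ.mulVec y = c ∧ (∀ i, 0 ≤ y i) ∧ (∀ q, c ⬝ᵥ xhat q = -(ε q)) ∧ b ⬝ᵥ y = -1

/-- Feasibility for the LP relaxation `GIO_R⁰_LP(X̂)`. -/
def FeasZLP {m n Q : ℕ} (A : Matrix (Fin m) (Fin n) ℝ) (b : Fin m → ℝ)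
    (xhat : Fin Q → Fin n → ℝ)
    (c : Fin n → ℝ) (y : Fin m → ℝ) : Prop :=
  Aᵀ.mulVec y = c ∧ (∀ i, 0 ≤ y i) ∧ (∀ q, c ⬝ᵥ xhat q = 0) ∧ b ⬝ᵥ y = 0 ∧
    (∑ i, y i) = 1

/-- Optimal value (`+∞` if infeasible) of `GIO_R⁺_LP(X̂)`. -/
noncomputable def zPLP {m n Q : ℕ} (A : Matrix (Fin m) (Fin n) ℝ) (b : Fin m → ℝ)
    (xhat : Fin Q → Fin n → ℝ) : ℝ≥0∞ :=
  sInf {v : ℝ≥0∞ | ∃ (c : Fin n → ℝ) (y : Fin m → ℝ) (ε : Fin Q → ℝ),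
    FeasPLP A b xhat c y ε ∧ v = ENNReal.ofReal (∑ q, |ε q - 1|)}

/-- Optimal value (`+∞` if infeasible) of `GIO_R⁻_LP(X̂)`. -/
noncomputable def zNLP {m n Q : ℕ} (A : Matrix (Fin m) (Fin n) ℝ) (b : Fin m → ℝ)
    (xhat : Fin Q → Fin n → ℝ) : ℝ≥0∞ :=
  sInf {v : ℝ≥0∞ | ∃ (c : Fin n → ℝ) (y : Fin m → ℝ) (ε : Fin Q → ℝ),
    FeasNLP A b xhat c y ε ∧ v = ENNReal.ofReal (∑ q, |ε q - 1|)}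

/-- Optimal value (`0` if feasible, `+∞` otherwise) of `GIO_R⁰_LP(X̂)`. -/
noncomputable def zZLP {m n Q : ℕ} (A : Matrix (Fin m) (Fin n) ℝ) (b : Fin m → ℝ)
    (xhat : Fin Q → Fin n → ℝ) : ℝ≥0∞ :=
  sInf {v : ℝ≥0∞ | ∃ (c : Fin n → ℝ) (y : Fin m → ℝ),
    FeasZLP A b xhat c y ∧ v = 0}

theorem stmt_19
    (m n Q : ℕ) (hm : 0 < m) (hn : 0 < n) (hQ : 0 < Q)
    (A : Matrix (Fin m) (Fin n) ℝ) (b : Fin m → ℝ) (hb : b ≠ 0)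
    (hrows : ∀ i, A i ≠ 0)
    (hPint : (interior {x : Fin n → ℝ | ∀ i, b i ≤ A.mulVec x i}).Nonempty)
    -- the normalization norm ‖·‖'
    (N : (Fin n → ℝ) → ℝ)
    (hN₁ : ∀ x y, N (x + y) ≤ N x + N y)
    (hN₂ : ∀ (a : ℝ) (x : Fin n → ℝ), N (a • x) = |a| * N x)
    (hN₃ : ∀ x, x ≠ 0 → 0 < N x)
    -- the data set X̂
    (xhat : Fin Q → Fin n → ℝ)
    -- (c*, y*, ε*) is an optimal solution of a sub-problem attaining
    -- z*_LP = min{z⁺_LP, z⁻_LP, z⁰_LP}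
    (cstar : Fin n → ℝ) (ystar : Fin m → ℝ) (εstar : Fin Q → ℝ)
    (hattain :
      (FeasPLP A b xhat cstar ystar εstar ∧
        (∀ c y ε, FeasPLP A b xhat c y ε →
          ∑ q, |εstar q - 1| ≤ ∑ q, |ε q - 1|) ∧
        ENNReal.ofReal (∑ q, |εstar q - 1|) =
          min (min (zPLP A b xhat) (zNLP A b xhat)) (zZLP A b xhat)) ∨
      (FeasNLP A b xhat cstar ystar εstar ∧
        (∀ c y ε, FeasNLP A b xhat c y ε →
          ∑ q, |εstar q - 1| ≤ ∑ q, |ε q - 1|) ∧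
        ENNReal.ofReal (∑ q, |εstar q - 1|) =
          min (min (zPLP A b xhat) (zNLP A b xhat)) (zZLP A b xhat)) ∨
      (FeasZLP A b xhat cstar ystar ∧ (∀ q, εstar q = 1) ∧
        zZLP A b xhat =
          min (min (zPLP A b xhat) (zNLP A b xhat)) (zZLP A b xhat)))
    -- assume c* ≠ 0
    (hc : cstar ≠ 0) :
    -- then z*_LP equals the optimal value of GIO_R(X̂) ...
    min (min (zPLP A b xhat) (zNLP A b xhat)) (zZLP A b xhat) =
      sInf {v : ℝ≥0∞ | ∃ (c : Fin n → ℝ) (y : Fin m → ℝ) (ε : Fin Q → ℝ),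
        FeasR A b N xhat c y ε ∧ v = ENNReal.ofReal (∑ q, |ε q - 1|)} ∧
    -- ... and the normalized tuple is an optimal solution of GIO_R(X̂)
    (FeasR A b N xhat ((N cstar)⁻¹ • cstar) ((N cstar)⁻¹ • ystar) εstar ∧
      ∀ c y ε, FeasR A b N xhat c y ε →
        ∑ q, |εstar q - 1| ≤ ∑ q, |ε q - 1|) := by

  classical
  have hN0 : N 0 = 0 := by
    have h := hN₂ 0 0
    simpa using h
  have habs : ∀ ε : Fin Q → ℝ, (0:ℝ) ≤ ∑ q, |ε q - 1| :=
    fun ε => Finset.sum_nonneg fun q _ => abs_nonneg _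
  have hNcpos : 0 < N cstar := hN₃ _ hc
  set t : ℝ := (N cstar)⁻¹ with ht
  have htpos : 0 < t := inv_pos.mpr hNcpos
  -- key lower bound: any GIO_R-feasible point dominates the min
  have hlow : ∀ c y ε, FeasR A b N xhat c y ε →
      min (min (zPLP A b xhat) (zNLP A b xhat)) (zZLP A b xhat) ≤
        ENNReal.ofReal (∑ q, |ε q - 1|) := by
    intro c y ε hf
    obtain ⟨h1, h2, h3, h4, h5⟩ := hf
    rcases lt_trichotomy (b ⬝ᵥ y) 0 with hs | hs | hs
    · -- b⬝y < 0 : scale to FeasNLP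
      have hsne : b ⬝ᵥ y ≠ 0 := ne_of_lt hs
      set u : ℝ := (-(b ⬝ᵥ y))⁻¹ with hu
      have hupos : 0 < u := inv_pos.mpr (neg_pos.mpr hs)
      have hus : u * (b ⬝ᵥ y) = -1 := by
        rw [hu, ← neg_inv, neg_mul, inv_mul_cancel₀ hsne]
      have hfeas : FeasNLP A b xhat (u • c) (u • y) ε := by
        refine ⟨?_, ?_, ?_, ?_⟩
        · rw [Matrix.mulVec_smul, h1]
        · intro i
          simpa using mul_nonneg hupos.le (h2 i)
        · intro q
          simp only [smul_dotProduct, smul_eq_mul, h3 q]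
          linear_combination ε q * hus
        · simp only [dotProduct_smul, smul_eq_mul]
          exact hus
      exact le_trans (min_le_left _ _) (le_trans (min_le_right _ _)
        (sInf_le ⟨u • c, u • y, ε, hfeas, rfl⟩))
    · -- b⬝y = 0 : all ε q = 1, use FeasZLP
      have hε1 : ∀ q, ε q = 1 := h5 hs
      have hcne : c ≠ 0 := by
        intro h
        rw [h, hN0] at h4
        exact zero_ne_one h4
      have hyne : y ≠ 0 := by
        intro h
        rw [h, Matrix.mulVec_zero] at h1
        exact hcne h1.symm
      obtain ⟨i, hyi⟩ := Function.ne_iff.mp hyne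
      have hS : 0 < ∑ j, y j :=
        Finset.sum_pos' (fun j _ => h2 j)
          ⟨i, Finset.mem_univ i, lt_of_le_of_ne (h2 i) (Ne.symm hyi)⟩
      set u : ℝ := (∑ j, y j)⁻¹ with hu
      have hupos : 0 < u := inv_pos.mpr hS
      have hfeas : FeasZLP A b xhat (u • c) (u • y) := by
        refine ⟨?_, ?_, ?_, ?_, ?_⟩
        · rw [Matrix.mulVec_smul, h1]
        · intro j
          simpa using mul_nonneg hupos.le (h2 j)
        · intro q
          simp [smul_dotProduct, smul_eq_mul, h3 q, hs]
        · simp [dotProduct_smul, smul_eq_mul, hs]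
        · simp only [Pi.smul_apply, smul_eq_mul, ← Finset.mul_sum]
          exact inv_mul_cancel₀ hS.ne'
      have hval : (∑ q, |ε q - 1|) = 0 := by simp [hε1]
      rw [hval, ENNReal.ofReal_zero]
      exact le_trans (min_le_right _ _) (sInf_le ⟨u • c, u • y, hfeas, rfl⟩)
    · -- b⬝y > 0 : scale to FeasPLP
      set u : ℝ := (b ⬝ᵥ y)⁻¹ with hu
      have hupos : 0 < u := inv_pos.mpr hs
      have hus : u * (b ⬝ᵥ y) = 1 := inv_mul_cancel₀ (ne_of_gt hs)
      have hfeas : FeasPLP A b xhat (u • c) (u • y) ε := by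
        refine ⟨?_, ?_, ?_, ?_⟩
        · rw [Matrix.mulVec_smul, h1]
        · intro i
          simpa using mul_nonneg hupos.le (h2 i)
        · intro q
          simp only [smul_dotProduct, smul_eq_mul, h3 q]
          linear_combination ε q * hus
        · simp only [dotProduct_smul, smul_eq_mul]
          exact hus
      exact le_trans (min_le_left _ _) (le_trans (min_le_left _ _)
        (sInf_le ⟨u • c, u • y, ε, hfeas, rfl⟩))
  have hNnorm : N (t • cstar) = 1 := by
    rw [hN₂, abs_of_pos htpos, ht]
    exact inv_mul_cancel₀ hNcpos.ne'
  have hmain : FeasR A b N xhat (t • cstar) (t • ystar) εstar ∧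
      min (min (zPLP A b xhat) (zNLP A b xhat)) (zZLP A b xhat) =
        ENNReal.ofReal (∑ q, |εstar q - 1|) := by
    rcases hattain with ⟨⟨h1, h2, h3, h4⟩, _, heq⟩ | ⟨⟨h1, h2, h3, h4⟩, _, heq⟩ |
        ⟨⟨h1, h2, h3, h4, h5⟩, hε1, heq⟩
    · refine ⟨⟨?_, ?_, ?_, hNnorm, ?_⟩, heq.symm⟩
      · rw [Matrix.mulVec_smul, h1]
      · intro i
        simpa using mul_nonneg htpos.le (h2 i)
      · intro q
        simp only [smul_dotProduct, dotProduct_smul, smul_eq_mul,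
          h3 q, h4]
        ring
      · intro h
        exfalso
        simp only [dotProduct_smul, smul_eq_mul, h4, mul_one] at h
        exact htpos.ne' h
    · refine ⟨⟨?_, ?_, ?_, hNnorm, ?_⟩, heq.symm⟩
      · rw [Matrix.mulVec_smul, h1]
      · intro i
        simpa using mul_nonneg htpos.le (h2 i)
      · intro q
        simp only [smul_dotProduct, dotProduct_smul, smul_eq_mul,
          h3 q, h4]
        ring
      · intro h
        exfalso
        simp only [dotProduct_smul, smul_eq_mul, h4, mul_neg, mul_one] at h
        exact htpos.ne' (neg_eq_zero.mp h)
    · have hz0 : zZLP A b xhat = 0 :=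
        le_antisymm (sInf_le ⟨cstar, ystar, ⟨h1, h2, h3, h4, h5⟩, rfl⟩) zero_le
      refine ⟨⟨?_, ?_, ?_, hNnorm, fun _ q => hε1 q⟩, ?_⟩
      · rw [Matrix.mulVec_smul, h1]
      · intro i
        simpa using mul_nonneg htpos.le (h2 i)
      · intro q
        simp [smul_dotProduct, dotProduct_smul, smul_eq_mul,
          h3 q, h4]
      · rw [← heq, hz0]
        simp [hε1]
  obtain ⟨hfeasR, hmineq⟩ := hmain
  refine ⟨?_, hfeasR, ?_⟩
  · refine le_antisymm ?_ (sInf_le ⟨t • cstar, t • ystar, εstar, hfeasR, hmineq⟩)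
    refine le_sInf ?_
    rintro v ⟨c, y, ε, hf, rfl⟩
    exact hlow c y ε hf
  · intro c y ε hf
    have h := hlow c y ε hf
    rw [hmineq] at h
    exact (ENNReal.ofReal_le_ofReal_iff (habs ε)).mp h
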